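/- Assume L(ε) stabilizes at k ≥ 0. Then the formal power series S(ε) := Σ_{l≥0} ε^l·S_{l+1} factorizes as S(ε) = ψ(ε)·Δ(ε), where ψ(ε) := Σ_{i≥0} ε^i·ψ_i; that is, for every l ≥ 0 one has S_{l+1} = Σ_{i+j=l, 0≤j≤k} ψ_i∘(S_{j+1}∘P_{j+1}). -/
import Mathlib


theorem stmt_10
    {𝕂 : Type*} [RCLike 𝕂]
    {B B' : Type*} [AddCommGroup B] [Module 𝕂 B]
    [AddCommGroup B'] [Module 𝕂 B']
    (L : ℕ → B →ₗ[𝕂] B')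
    (Sb S : ℕ → B →ₗ[𝕂] B')
    (N Nc : ℕ → Submodule 𝕂 B)
    (R Rc : ℕ → Submodule 𝕂 B')
    (P : ℕ → B' →ₗ[𝕂] B')
    (T : ℕ → B' →ₗ[𝕂] B)
    (E M : ℕ → ℕ → B →ₗ[𝕂] B)
    (hL : ∃ i, L i ≠ 0)
    (hN0 : N 0 = ⊤) (hRc0 : Rc 0 = ⊤)
    (hSb1 : Sb 1 = L 0)
    (hSbrec : ∀ k, 1 ≤ k → Sb (k + 1) = ∑ i ∈ Finset.Icc 1 k, (L i).comp (M i k))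
    (hSdef : ∀ k, S (k + 1) = Sb (k + 1) - ∑ i ∈ Finset.Icc 1 k, (P i).comp (Sb (k + 1)))
    (hNdef : ∀ k, N (k + 1) = LinearMap.ker (S (k + 1)) ⊓ N k)
    (hRdef : ∀ k, R (k + 1) = Submodule.map (S (k + 1)) (N k))
    (hNcompl : ∀ k, Disjoint (Nc (k + 1)) (N (k + 1)) ∧ Nc (k + 1) ⊔ N (k + 1) = N k)
    (hRcompl : ∀ k, Disjoint (R (k + 1)) (Rc (k + 1)) ∧ R (k + 1) ⊔ Rc (k + 1) = Rc k)
    (hPrange : ∀ i, 1 ≤ i → LinearMap.range (P i) ≤ R i)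
    (hPid : ∀ i, 1 ≤ i → ∀ y ∈ R i, P i y = y)
    (hPzeroRc : ∀ i, 1 ≤ i → ∀ y ∈ Rc i, P i y = 0)
    (hPzeroR : ∀ i j, 1 ≤ j → j < i → ∀ y ∈ R j, P i y = 0)
    (hTrange : ∀ i, 1 ≤ i → ∀ y, T i y ∈ Nc i)
    (hTS : ∀ i, 1 ≤ i → ∀ x ∈ Nc i, T i (S i x) = x)
    (hST : ∀ i, 1 ≤ i → ∀ y, S i (T i y) = P i y)
    (hE11 : E 1 1 = LinearMap.id)
    (hEdiag : ∀ k, E (k + 1) (k + 1) = LinearMap.id)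
    (hErec : ∀ k i, 1 ≤ i → i ≤ k →
      E i (k + 1) = -((T i).comp (∑ v ∈ Finset.Icc (i + 1) (k + 1), (Sb v).comp (E v (k + 1)))))
    (hM11 : M 1 1 = LinearMap.id)
    (hM1 : ∀ k, 1 ≤ k → M 1 (k + 1) = E 1 (k + 1))
    (hMrec : ∀ k a, 2 ≤ a → a ≤ k + 1 →
      M a (k + 1) = ∑ b ∈ Finset.Icc (a - 1) k, (M (a - 1) b).comp (E (b + 1) (k + 1)))
    (rank : B → ℕ∞)
    (hrank : ∀ b0 : B, rank b0 = sSup {x : ℕ∞ | ∃ m : ℕ, 1 ≤ m ∧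
      (∃ b : ℕ → B, b 0 = b0 ∧
        ∀ l, l + 1 ≤ m → ∑ i ∈ Finset.range (l + 1), L i (b (l - i)) = 0) ∧ x = (m : ℕ∞)})
    (k : ℕ)
    (hstab : (∀ b0 : B, rank b0 ≤ (k : ℕ∞) ∨ rank b0 = ⊤) ∧ ∃ b0 : B, rank b0 = (k : ℕ∞))
    (ψ : ℕ → B' →ₗ[𝕂] B')
    (hψ0 : ψ 0 = LinearMap.id)
    (hψ : ∀ i, 1 ≤ i → ψ i = ∑ j ∈ Finset.Icc 1 (k + 1), (S (i + j)).comp (T j))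
    (Pn : ℕ → B →ₗ[𝕂] B)
    (hPnrange : ∀ i, 1 ≤ i → i ≤ k + 1 → LinearMap.range (Pn i) ≤ Nc i)
    (hPnid : ∀ i, 1 ≤ i → i ≤ k + 1 → ∀ x ∈ Nc i, Pn i x = x)
    (hPnzero : ∀ i j, 1 ≤ i → i ≤ k + 1 → 1 ≤ j → j ≤ k + 1 → j ≠ i → ∀ x ∈ Nc j, Pn i x = 0)
    (hPnN : ∀ i, 1 ≤ i → i ≤ k + 1 → ∀ x ∈ N (k + 1), Pn i x = 0)
    (hPnsum : ∀ x : B, x - ∑ i ∈ Finset.Icc 1 (k + 1), Pn i x ∈ N (k + 1))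
    :
    ∀ l : ℕ, S (l + 1) = ∑ j ∈ Finset.range (min (l + 1) (k + 1)),
      (ψ (l - j)).comp ((S (j + 1)).comp (Pn (j + 1))) := by
    classical
  -- pointwise versions of definitions
  have hSp : ∀ m, 1 ≤ m → ∀ y, S m y = Sb m y - ∑ i ∈ Finset.Icc 1 (m-1), P i (Sb m y) := by
    intro m hm y
    obtain ⟨m', rfl⟩ : ∃ m', m = m' + 1 := ⟨m - 1, by omega⟩
    have h := hSdef m'
    simp only [Nat.add_sub_cancel]
    rw [h]
    simp [LinearMap.sub_apply, LinearMap.sum_apply, LinearMap.comp_apply]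
  have hS1 : ∀ y, S 1 y = L 0 y := by
    intro y
    have := hSp 1 le_rfl y
    simpa [hSb1, Finset.Icc_eq_empty (by omega : ¬ (1:ℕ) ≤ 0)] using this
  have hSbp : ∀ m, 1 ≤ m → ∀ y, Sb (m+1) y = ∑ i ∈ Finset.Icc 1 m, L i (M i m y) := by
    intro m hm y
    rw [hSbrec m hm]
    simp [LinearMap.sum_apply, LinearMap.comp_apply]
  have hEp : ∀ m i, 1 ≤ i → i + 1 ≤ m → ∀ x,
      E i m x = - T i (∑ v ∈ Finset.Icc (i+1) m, Sb v (E v m x)) := by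
    intro m i hi him x
    obtain ⟨m', rfl⟩ : ∃ m', m = m' + 1 := ⟨m - 1, by omega⟩
    rw [hErec m' i hi (by omega)]
    simp [LinearMap.sum_apply, LinearMap.comp_apply]
  have hMp : ∀ m a, 2 ≤ a → a ≤ m → ∀ x,
      M a m x = ∑ b ∈ Finset.Icc (a-1) (m-1), M (a-1) b (E (b+1) m x) := by
    intro m a ha ham x
    obtain ⟨m', rfl⟩ : ∃ m', m = m' + 1 := ⟨m - 1, by omega⟩
    rw [hMrec m' a ha (by omega)]
    simp [LinearMap.sum_apply, LinearMap.comp_apply]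
  have hEdiag' : ∀ m, 1 ≤ m → ∀ x, E m m x = x := by
    intro m hm x
    obtain ⟨m', rfl⟩ : ∃ m', m = m' + 1 := ⟨m - 1, by omega⟩
    rw [hEdiag m']; rfl
  have hMdiag : ∀ m, 1 ≤ m → ∀ x, M m m x = x := by
    intro m hm
    induction m with
    | zero => omega
    | succ m ih =>
      intro x
      rcases Nat.eq_or_lt_of_le hm with h | h
      · rw [show m + 1 = 1 by omega, hM11]; rfl
      · have hm1 : 1 ≤ m := by omega
        rw [hMp (m+1) (m+1) (by omega) le_rfl]
        simp only [Nat.add_sub_cancel, Finset.Icc_self, Finset.sum_singleton]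
        rw [hEdiag' (m+1) (by omega)]
        exact ih hm1 x
  -- submodule facts
  have hNmono : ∀ j, N (j+1) ≤ N j := by
    intro j; rw [hNdef j]; exact inf_le_right
  have hNle : ∀ i j, i ≤ j → N j ≤ N i := by
    intro i j hij
    induction j with
    | zero => have : i = 0 := by omega
              subst this; exact le_rfl
    | succ j ih =>
      rcases Nat.lt_or_ge i (j+1) with h | h
      · exact le_trans (hNmono j) (ih (by omega))
      · have : i = j + 1 := by omega
        subst this; exact le_rfl
  have hNker : ∀ j, ∀ x ∈ N (j+1), S (j+1) x = 0 := by
    intro j x hx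
    rw [hNdef j] at hx
    exact hx.1
  have hNker' : ∀ j, 1 ≤ j → ∀ x ∈ N j, S j x = 0 := by
    intro j hj x hx
    obtain ⟨j', rfl⟩ : ∃ j', j = j' + 1 := ⟨j - 1, by omega⟩
    exact hNker j' x hx
  have hNcsub : ∀ j, Nc (j+1) ≤ N j := by
    intro j; rw [← (hNcompl j).2]; exact le_sup_left
  have hNcker0 : ∀ j x, x ∈ Nc (j+1) → S (j+1) x = 0 → x = 0 := by
    intro j x hx hSx
    have hxN : x ∈ N (j+1) := by
      rw [hNdef j]
      exact ⟨LinearMap.mem_ker.mpr hSx, hNcsub j hx⟩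
    exact Submodule.disjoint_def.mp (hNcompl j).1 x hx hxN
  have hSNc : ∀ j c, 1 ≤ j → j < c → ∀ x ∈ Nc c, S j x = 0 := by
    intro j c hj hjc x hx
    obtain ⟨c', rfl⟩ : ∃ c', c = c' + 1 := ⟨c - 1, by omega⟩
    have : x ∈ N j := hNle j c' (by omega) (hNcsub c' hx)
    exact hNker' j hj x this
  have hRsub : ∀ j, R (j+1) ≤ Rc j := by
    intro j; rw [← (hRcompl j).2]; exact le_sup_left
  have hRcmono : ∀ i j, i ≤ j → Rc j ≤ Rc i := by
    intro i j hij
    induction j with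
    | zero => have : i = 0 := by omega
              subst this; exact le_rfl
    | succ j ih =>
      rcases Nat.lt_or_ge i (j+1) with h | h
      · refine le_trans ?_ (ih (by omega))
        rw [← (hRcompl j).2]; exact le_sup_right
      · have : i = j + 1 := by omega
        subst this; exact le_rfl
  have hPR0 : ∀ i j, 1 ≤ i → 1 ≤ j → i ≠ j → ∀ y ∈ R j, P i y = 0 := by
    intro i j hi hj hne y hy
    rcases Nat.lt_or_ge i j with h | h
    · obtain ⟨j', rfl⟩ : ∃ j', j = j' + 1 := ⟨j - 1, by omega⟩
      exact hPzeroRc i hi y (hRcmono i j' (by omega) (hRsub j' hy))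
    · exact hPzeroR i j hj (by omega) y hy
  have hTzero : ∀ i j, 1 ≤ i → 1 ≤ j → i ≠ j → ∀ y ∈ R j, T i y = 0 := by
    intro i j hi hj hne y hy
    have h1 : S i (T i y) = 0 := by
      rw [hST i hi y]
      exact hPR0 i j hi hj hne y hy
    obtain ⟨i', rfl⟩ : ∃ i', i = i' + 1 := ⟨i - 1, by omega⟩
    exact hNcker0 i' _ (hTrange _ hi y) h1
  have hSE0 : ∀ m c j, 1 ≤ j → j < c → c + 1 ≤ m → ∀ x, S j (E c m x) = 0 := by
    intro m c j hj hjc hcm x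
    rw [hEp m c (by omega) hcm x]
    have h1 : T c (∑ v ∈ Finset.Icc (c+1) m, Sb v (E v m x)) ∈ Nc c := by
      obtain ⟨c', rfl⟩ : ∃ c', c = c' + 1 := ⟨c - 1, by omega⟩
      exact hTrange _ (by omega) _
    rw [map_neg]
    obtain ⟨c', rfl⟩ : ∃ c', c = c' + 1 := ⟨c - 1, by omega⟩
    have : S j (T (c'+1) (∑ v ∈ Finset.Icc (c'+1+1) m, Sb v (E v m x))) = 0 := by
      apply hNker' j hj
      exact hNle j c' (by omega) (hNcsub c' h1)
    rw [this, neg_zero]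
  -- splitting a sum over Icc at the bottom
  have hIccBot : ∀ (a b : ℕ), a ≤ b → Finset.Icc a b = insert a (Finset.Icc (a+1) b) := by
    intro a b hab
    ext x
    simp only [Finset.mem_Icc, Finset.mem_insert]
    omega
  -- Lemma 3
  have hL3 : ∀ m, 1 ≤ m → ∀ x,
      (∑ c ∈ Finset.Icc 1 m, Sb c (E c m x)) = S m x := by
    intro m hm
    have aux : ∀ d i, i + d = m → 1 ≤ i → ∀ x,
        (∑ c ∈ Finset.Icc i m, Sb c (E c m x))
          - ∑ j ∈ Finset.Icc 1 (i-1), P j (∑ c ∈ Finset.Icc i m, Sb c (E c m x))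
        = S m x := by
      intro d
      induction d with
      | zero =>
        intro i hi hi1 x
        have : i = m := by omega
        subst this
        simp only [Finset.Icc_self, Finset.sum_singleton]
        rw [hEdiag' i hi1, hSp i hi1]
      | succ d ih =>
        intro i hi hi1 x
        have him : i + 1 ≤ m := by omega
        set G := ∑ c ∈ Finset.Icc (i+1) m, Sb c (E c m x) with hG
        have hsplit : (∑ c ∈ Finset.Icc i m, Sb c (E c m x))
            = Sb i (E i m x) + G := by
          rw [hIccBot i m (by omega), Finset.sum_insert (by simp)]
        have hSiE : S i (E i m x) = - P i G := by
          rw [hEp m i hi1 him x, map_neg, hST i hi1]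
        have hSA : Sb i (E i m x) - ∑ j ∈ Finset.Icc 1 (i-1), P j (Sb i (E i m x))
            = - P i G := by
          rw [← hSp i hi1 (E i m x)]; exact hSiE
        have ihG := ih (i+1) (by omega) (by omega) x
        simp only [Nat.add_sub_cancel] at ihG
        have hIccTop : Finset.Icc 1 i = insert i (Finset.Icc 1 (i-1)) := by
          ext x; simp only [Finset.mem_Icc, Finset.mem_insert]; omega
        rw [hIccTop, Finset.sum_insert (by simp; omega)] at ihG
        rw [hsplit]
        simp only [map_add, Finset.sum_add_distrib]
        have hre : Sb i (E i m x) + G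
              - (∑ j ∈ Finset.Icc 1 (i-1), P j (Sb i (E i m x))
                 + ∑ j ∈ Finset.Icc 1 (i-1), P j G)
            = (Sb i (E i m x) - ∑ j ∈ Finset.Icc 1 (i-1), P j (Sb i (E i m x)))
              + (G - ∑ j ∈ Finset.Icc 1 (i-1), P j G) := by abel
        rw [hre, hSA, ← ihG]
        abel
    have h := aux (m-1) 1 (by omega) le_rfl
    intro x
    have h' := h x
    simpa using h'
  have hshift : ∀ (u v : ℕ) (f : ℕ → B'), ∑ a ∈ Finset.Icc (u+1) (v+1), f a
      = ∑ a ∈ Finset.Icc u v, f (a+1) := by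
    intro u v f
    rw [← Finset.map_add_right_Icc u v 1, Finset.sum_map]
    rfl
  -- Lemma 1
  have hL1 : ∀ t, 1 ≤ t → ∀ m, t ≤ m → ∀ x,
      (∑ a ∈ Finset.Icc t m, L (a - t) (M a m x)) = S (m - t + 1) x := by
    intro t ht
    induction t, ht using Nat.le_induction with
    | base =>
      intro m hm x
      rcases Nat.eq_or_lt_of_le hm with h | h
      · subst h
        simp only [Finset.Icc_self, Finset.sum_singleton, Nat.sub_self]
        rw [hM11]
        exact (hS1 x).symm
      · obtain ⟨k', rfl⟩ : ∃ k', m = k' + 1 := ⟨m - 1, by omega⟩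
        have hk' : 1 ≤ k' := by omega
        rw [hIccBot 1 (k'+1) (by omega), Finset.sum_insert (by simp)]
        have h1 : L (1-1) (M 1 (k'+1) x) = Sb 1 (E 1 (k'+1) x) := by
          rw [hM1 k' hk', hSb1]
        have h2 : ∑ a ∈ Finset.Icc (1+1) (k'+1), L (a-1) (M a (k'+1) x)
            = ∑ b ∈ Finset.Icc 1 k', Sb (b+1) (E (b+1) (k'+1) x) := by
          have e1 : ∀ a ∈ Finset.Icc (1+1) (k'+1), L (a-1) (M a (k'+1) x)
              = ∑ b ∈ Finset.Icc (a-1) k', L (a-1) (M (a-1) b (E (b+1) (k'+1) x)) := by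
            intro a ha
            simp only [Finset.mem_Icc] at ha
            rw [hMp (k'+1) a (by omega) (by omega) x]
            simp only [Nat.add_sub_cancel, map_sum]
          rw [Finset.sum_congr rfl e1]
          rw [Finset.sum_comm' (s' := fun b => Finset.Icc (1+1) (b+1))
            (t' := Finset.Icc 1 k') (by intro a b; simp only [Finset.mem_Icc]; omega)]
          refine Finset.sum_congr rfl ?_
          intro b hb
          simp only [Finset.mem_Icc] at hb
          rw [hshift 1 b]
          rw [hSbp b hb.1 (E (b+1) (k'+1) x)]
          refine Finset.sum_congr rfl ?_
          intro a ha
          simp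
        rw [h1, h2]
        have hmm : k' + 1 - 1 + 1 = k' + 1 := by omega
        rw [hmm, ← hL3 (k'+1) (by omega) x]
        rw [hIccBot 1 (k'+1) (by omega), Finset.sum_insert (by simp)]
        rw [hshift 1 k']
    | succ t ht ih =>
      intro m hm x
      obtain ⟨k', rfl⟩ : ∃ k', m = k' + 1 := ⟨m - 1, by omega⟩
      have htk : t ≤ k' := by omega
      have e1 : ∀ a ∈ Finset.Icc (t+1) (k'+1), L (a-(t+1)) (M a (k'+1) x)
          = ∑ b ∈ Finset.Icc (a-1) k', L (a-(t+1)) (M (a-1) b (E (b+1) (k'+1) x)) := by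
        intro a ha
        simp only [Finset.mem_Icc] at ha
        rw [hMp (k'+1) a (by omega) (by omega) x]
        simp only [Nat.add_sub_cancel, map_sum]
      rw [Finset.sum_congr rfl e1]
      rw [Finset.sum_comm' (s' := fun b => Finset.Icc (t+1) (b+1))
        (t' := Finset.Icc t k') (by intro a b; simp only [Finset.mem_Icc]; omega)]
      have e2 : ∀ b ∈ Finset.Icc t k',
          (∑ a ∈ Finset.Icc (t+1) (b+1), L (a-(t+1)) (M (a-1) b (E (b+1) (k'+1) x)))
          = S (b - t + 1) (E (b+1) (k'+1) x) := by
        intro b hb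
        simp only [Finset.mem_Icc] at hb
        rw [hshift t b]
        rw [← ih b hb.1 (E (b+1) (k'+1) x)]
        refine Finset.sum_congr rfl ?_
        intro a ha
        simp only [Finset.mem_Icc] at ha
        have e3 : a + 1 - (t+1) = a - t := by omega
        have e4 : a + 1 - 1 = a := by omega
        rw [e3, e4]
      rw [Finset.sum_congr rfl e2]
      have hIccTop : Finset.Icc t k' = insert k' (Finset.Icc t (k'-1)) := by
        ext y; simp only [Finset.mem_Icc, Finset.mem_insert]; omega
      rw [hIccTop, Finset.sum_insert (by simp only [Finset.mem_Icc]; omega)]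
      have e5 : ∀ b ∈ Finset.Icc t (k'-1), S (b - t + 1) (E (b+1) (k'+1) x) = 0 := by
        intro b hb
        simp only [Finset.mem_Icc] at hb
        exact hSE0 (k'+1) (b+1) (b-t+1) (by omega) (by omega) (by omega) x
      rw [Finset.sum_congr rfl e5, Finset.sum_const_zero, add_zero]
      rw [hEdiag' (k'+1) (by omega) x]
      have : k' - t + 1 = k' + 1 - (t+1) + 1 := by omega
      rw [this]
  -- shifting Icc to range
  have hIccRange : ∀ (w l : ℕ) (f : ℕ → B'), ∑ a ∈ Finset.Icc w (w + l), f a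
      = ∑ i ∈ Finset.range (l+1), f (i + w) := by
    intro w l f
    have h0 : Finset.Icc 0 l = Finset.range (l+1) := by
      ext x; simp only [Finset.mem_Icc, Finset.mem_range]; omega
    have h := Finset.sum_map (Finset.Icc 0 l) (addRightEmbedding w) f
    rw [Finset.map_add_right_Icc, zero_add] at h
    rw [show w + l = l + w by omega, h, h0]
    rfl
  -- chains generated by M from elements of N m
  have hChain : ∀ m, 1 ≤ m → ∀ b0 ∈ N m,
      M (m - 0) m b0 = b0 ∧
      ∀ l, l + 1 ≤ m → ∑ i ∈ Finset.range (l+1), L i (M (m - (l - i)) m b0) = 0 := by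
    intro m hm b0 hb0
    constructor
    · simpa using hMdiag m hm b0
    · intro l hl
      have h1 : ∑ i ∈ Finset.range (l+1), L i (M (m - (l - i)) m b0)
          = ∑ a ∈ Finset.Icc (m-l) m, L (a - (m-l)) (M a m b0) := by
        rw [show Finset.Icc (m-l) m = Finset.Icc (m-l) ((m-l)+l) from by congr 1; omega]
        rw [hIccRange (m-l) l]
        refine Finset.sum_congr rfl ?_
        intro i hi
        simp only [Finset.mem_range] at hi
        have e1 : i + (m-l) - (m-l) = i := by omega
        have e2 : m - (l - i) = i + (m-l) := by omega
        rw [e1, e2]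
      rw [h1, hL1 (m-l) (by omega) m (by omega) b0]
      have e3 : m - (m - l) + 1 = l + 1 := by omega
      rw [e3]
      exact hNker' (l+1) (by omega) b0 (hNle (l+1) m hl hb0)
  -- projections kill sums of elements of the R j
  have hkill : ∀ (lbig s : ℕ) (u : ℕ → B'), s ≤ lbig → (∀ j ∈ Finset.Icc 1 s, u j ∈ R j) →
      (∑ j ∈ Finset.Icc 1 s, u j) - ∑ i ∈ Finset.Icc 1 lbig, P i (∑ j ∈ Finset.Icc 1 s, u j) = 0 := by
    intro lbig s u hs hu
    have h1 : ∀ i, P i (∑ j ∈ Finset.Icc 1 s, u j) = ∑ j ∈ Finset.Icc 1 s, P i (u j) := by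
      intro i; exact map_sum _ _ _
    simp only [h1]
    rw [Finset.sum_comm]
    have h2 : ∀ j ∈ Finset.Icc 1 s, ∑ i ∈ Finset.Icc 1 lbig, P i (u j) = u j := by
      intro j hj
      simp only [Finset.mem_Icc] at hj
      rw [Finset.sum_eq_single_of_mem j (by simp only [Finset.mem_Icc]; omega)]
      · exact hPid j hj.1 (u j) (hu j (by simp only [Finset.mem_Icc]; omega))
      · intro i hi hne
        simp only [Finset.mem_Icc] at hi
        exact hPR0 i j hi.1 hj.1 hne (u j) (hu j (by simp only [Finset.mem_Icc]; omega))
    rw [Finset.sum_congr rfl h2, sub_self]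
  -- main induction: roots of chains of length r lie in N r, and the "next value"
  -- of any chain lies in R 1 + ... + R (r+1)
  have Phi : ∀ r, 1 ≤ r → ∀ c : ℕ → B,
      (∀ l, l + 1 ≤ r → ∑ i ∈ Finset.range (l+1), L i (c (l - i)) = 0) →
      c 0 ∈ N r ∧ ∃ w : ℕ → B', (∀ j ∈ Finset.Icc 1 (r+1), w j ∈ R j) ∧
        (∑ j ∈ Finset.range r, L (r - j) (c j)) = ∑ j ∈ Finset.Icc 1 (r+1), w j := by
    intro r
    induction r using Nat.strong_induction_on with
    | _ r ih =>
    intro hr c hc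
    -- difference chains rooted at 0
    have hdiff : ∀ s, 1 ≤ s → s ≤ r → ∀ d : ℕ → B, d 0 = 0 →
        (∀ l', l' + 1 ≤ s → ∑ i ∈ Finset.range (l'+1), L i (d (l' - i)) = 0) →
        ∃ v : ℕ → B', (∀ j ∈ Finset.Icc 1 s, v j ∈ R j) ∧
          (∑ i ∈ Finset.Icc 1 s, L i (d (s - i))) = ∑ j ∈ Finset.Icc 1 s, v j := by
      intro s hs hsr d hd0 hdc
      rcases Nat.eq_or_lt_of_le hs with h1 | h1
      · refine ⟨0, by simp, ?_⟩
        rw [← h1]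
        simp [hd0]
      · -- s ≥ 2 : shift the chain
        have hd'c : ∀ l', l' + 1 ≤ s - 1 →
            ∑ i ∈ Finset.range (l'+1), L i (d ((l' - i) + 1)) = 0 := by
          intro l' hl'
          have h2 := hdc (l'+1) (by omega)
          rw [Finset.sum_range_succ] at h2
          have e1 : l' + 1 - (l'+1) = 0 := by omega
          rw [e1, hd0, map_zero, add_zero] at h2
          rw [← h2]
          refine Finset.sum_congr rfl ?_
          intro i hi
          simp only [Finset.mem_range] at hi
          have e2 : l' + 1 - i = (l' - i) + 1 := by omega
          rw [e2]
        obtain ⟨_, v, hv, heq⟩ := ih (s-1) (by omega) (by omega) (fun j => d (j+1)) hd'c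
        have e3 : s - 1 + 1 = s := by omega
        rw [e3] at hv heq
        refine ⟨v, hv, ?_⟩
        rw [← heq]
        have hsplit : Finset.Icc 1 s = insert s (Finset.Icc 1 (s-1)) := by
          ext y; simp only [Finset.mem_Icc, Finset.mem_insert]; omega
        rw [hsplit, Finset.sum_insert (by simp only [Finset.mem_Icc]; omega)]
        rw [Nat.sub_self, hd0, map_zero, zero_add]
        refine Finset.sum_nbij' (fun i => s - 1 - i) (fun j => s - 1 - j) ?_ ?_ ?_ ?_ ?_
        · intro a haa; simp only [Finset.mem_Icc] at haa; simp only [Finset.mem_range]; omega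
        · intro a haa; simp only [Finset.mem_range] at haa; simp only [Finset.mem_Icc]; omega
        · intro a haa; simp only [Finset.mem_Icc] at haa
          show s - 1 - (s - 1 - a) = a; omega
        · intro a haa; simp only [Finset.mem_range] at haa
          show s - 1 - (s - 1 - a) = a; omega
        · intro a haa; simp only [Finset.mem_Icc] at haa
          have e4 : s - 1 - (s - 1 - a) = a := by omega
          have e5 : s - a = (s - 1 - a) + 1 := by omega
          rw [e4, e5]
    -- part (a)
    have ha : c 0 ∈ N r := by
      rcases Nat.eq_or_lt_of_le hr with h1 | h1
      · rw [← h1]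
        rw [show (1:ℕ) = 0 + 1 by omega, hNdef 0]
        refine ⟨LinearMap.mem_ker.mpr ?_, by rw [hN0]; trivial⟩
        have h2 := hc 0 (by omega)
        simp only [zero_add, Finset.range_one, Finset.sum_singleton, Nat.sub_zero] at h2
        rw [show (0:ℕ) + 1 = 1 by omega, hS1]; exact h2
      · obtain ⟨l, rfl⟩ : ∃ l, r = l + 1 := ⟨r - 1, by omega⟩
        have hl1 : 1 ≤ l := by omega
        have hc0l : c 0 ∈ N l :=
          (ih l (by omega) hl1 c (fun l' hl' => hc l' (by omega))).1
        have hMc := hChain l hl1 (c 0) hc0l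
        set d : ℕ → B := fun j => M (l - j) l (c 0) - c j with hd
        have hd0 : d 0 = 0 := by
          simp only [hd]
          rw [hMc.1, sub_self]
        have hdc : ∀ l', l' + 1 ≤ l → ∑ i ∈ Finset.range (l'+1), L i (d (l' - i)) = 0 := by
          intro l' hl'
          simp only [hd, map_sub, Finset.sum_sub_distrib]
          rw [hMc.2 l' hl', hc l' (by omega), sub_self]
        obtain ⟨v, hv, hveq⟩ := hdiff l hl1 (by omega) d hd0 hdc
        have h3 : ∑ i ∈ Finset.Icc 1 l, L i (c (l - i)) = - L 0 (c l) := by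
          have h4 := hc l le_rfl
          have hsplit : Finset.range (l+1) = insert 0 (Finset.Icc 1 l) := by
            ext y; simp only [Finset.mem_range, Finset.mem_insert, Finset.mem_Icc]; omega
          rw [hsplit, Finset.sum_insert (by simp)] at h4
          have e1 : l - 0 = l := by omega
          rw [e1] at h4
          exact eq_neg_of_add_eq_zero_right h4
        have hMsplit : ∀ i ∈ Finset.Icc 1 l, L i (M i l (c 0)) = L i (c (l-i)) + L i (d (l-i)) := by
          intro i hi; simp only [Finset.mem_Icc] at hi
          simp only [hd]
          have e : l - (l - i) = i := by omega
          rw [e, ← map_add]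
          congr 1
          abel
        have hsb2 : Sb (l+1) (c 0) = - L 0 (c l) + ∑ j ∈ Finset.Icc 1 l, v j := by
          rw [hSbp l hl1 (c 0), Finset.sum_congr rfl hMsplit, Finset.sum_add_distrib, h3, hveq]
        set u : ℕ → B' := fun j => v j + (if j = 1 then -(L 0 (c l)) else 0) with hu
        have hurange : ∀ j ∈ Finset.Icc 1 l, u j ∈ R j := by
          intro j hj; simp only [Finset.mem_Icc] at hj
          refine add_mem (hv j (by simp only [Finset.mem_Icc]; omega)) ?_
          by_cases hj1 : j = 1
          · rw [hj1, if_pos rfl]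
            rw [show (1:ℕ) = 0 + 1 by omega, hRdef 0]
            refine ⟨-(c l), by rw [hN0]; trivial, ?_⟩
            rw [map_neg]
            rw [show (0:ℕ) + 1 = 1 by omega, hS1]
          · rw [if_neg hj1]
            exact zero_mem _
        have husum : ∑ j ∈ Finset.Icc 1 l, u j = Sb (l+1) (c 0) := by
          simp only [hu]
          rw [Finset.sum_add_distrib, Finset.sum_ite_eq' (Finset.Icc 1 l) 1
            (fun _ => -(L 0 (c l)))]
          rw [if_pos (by simp only [Finset.mem_Icc]; omega)]
          rw [hsb2]; abel
        have hS0 : S (l+1) (c 0) = 0 := by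
          have h5 := hSp (l+1) (by omega) (c 0)
          simp only [Nat.add_sub_cancel] at h5
          rw [h5, ← husum]
          exact hkill l l u le_rfl hurange
        rw [hNdef l]
        exact ⟨LinearMap.mem_ker.mpr hS0, hc0l⟩
    -- part (b)
    refine ⟨ha, ?_⟩
    have hMc := hChain r hr (c 0) ha
    set e : ℕ → B := fun j => M (r - j) r (c 0) - c j with he
    have he0 : e 0 = 0 := by
      simp only [he]; rw [hMc.1, sub_self]
    have hec : ∀ l', l' + 1 ≤ r → ∑ i ∈ Finset.range (l'+1), L i (e (l' - i)) = 0 := by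
      intro l' hl'
      simp only [he, map_sub, Finset.sum_sub_distrib]
      rw [hMc.2 l' hl', hc l' hl', sub_self]
    obtain ⟨v, hv, hveq⟩ := hdiff r hr le_rfl e he0 hec
    have hV : ∑ j ∈ Finset.range r, L (r - j) (c j) = ∑ i ∈ Finset.Icc 1 r, L i (c (r - i)) := by
      refine Finset.sum_nbij' (fun j => r - j) (fun i => r - i) ?_ ?_ ?_ ?_ ?_
      · intro a haa; simp only [Finset.mem_range] at haa; simp only [Finset.mem_Icc]; omega
      · intro a haa; simp only [Finset.mem_Icc] at haa; simp only [Finset.mem_range]; omega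
      · intro a haa; simp only [Finset.mem_range] at haa
        show r - (r - a) = a; omega
      · intro a haa; simp only [Finset.mem_Icc] at haa
        show r - (r - a) = a; omega
      · intro a haa; simp only [Finset.mem_range] at haa
        have e4 : r - (r - a) = a := by omega
        rw [e4]
    have hsplit2 : ∀ i ∈ Finset.Icc 1 r, L i (c (r-i)) = L i (M i r (c 0)) - L i (e (r-i)) := by
      intro i hi; simp only [Finset.mem_Icc] at hi
      simp only [he]
      have e5 : r - (r - i) = i := by omega
      rw [e5, ← map_sub]
      congr 1
      abel
    have hsum2 : ∑ i ∈ Finset.Icc 1 r, L i (c (r - i))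
        = Sb (r+1) (c 0) - ∑ j ∈ Finset.Icc 1 r, v j := by
      rw [Finset.sum_congr rfl hsplit2, Finset.sum_sub_distrib, ← hSbp r hr (c 0), hveq]
    have hsdecomp : Sb (r+1) (c 0) = (∑ i ∈ Finset.Icc 1 r, P i (Sb (r+1) (c 0))) + S (r+1) (c 0) := by
      have h6 := hSp (r+1) (by omega) (c 0)
      simp only [Nat.add_sub_cancel] at h6
      rw [h6]; abel
    set w : ℕ → B' := fun j => if j = r+1 then S (r+1) (c 0) else P j (Sb (r+1) (c 0)) - v j with hw
    refine ⟨w, ?_, ?_⟩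
    · intro j hj; simp only [Finset.mem_Icc] at hj
      simp only [hw]
      by_cases hjr : j = r+1
      · rw [hjr, if_pos rfl, hRdef r]
        exact ⟨c 0, ha, rfl⟩
      · rw [if_neg hjr]
        exact sub_mem (hPrange j (by omega) (LinearMap.mem_range_self _ _))
          (hv j (by simp only [Finset.mem_Icc]; omega))
    · rw [hV, hsum2]
      have hsplit3 : Finset.Icc 1 (r+1) = insert (r+1) (Finset.Icc 1 r) := by
        ext y; simp only [Finset.mem_Icc, Finset.mem_insert]; omega
      rw [hsplit3, Finset.sum_insert (by simp only [Finset.mem_Icc]; omega)]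
      rw [show w (r+1) = S (r+1) (c 0) from by simp [hw]]
      have h7 : ∀ j ∈ Finset.Icc 1 r, w j = P j (Sb (r+1) (c 0)) - v j := by
        intro j hj; simp only [Finset.mem_Icc] at hj
        simp only [hw]
        rw [if_neg (by omega)]
      rw [Finset.sum_congr rfl h7, Finset.sum_sub_distrib]
      conv_lhs => rw [hsdecomp]
      abel
  -- stabilization: elements of N (k+1) lie in every N m
  have hNinf : ∀ b0 ∈ N (k+1), ∀ m, 1 ≤ m → b0 ∈ N m := by
    intro b0 hb0 m hm
    have hch := hChain (k+1) (by omega) b0 hb0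
    have hmem : ((k+1 : ℕ) : ℕ∞) ∈ {x : ℕ∞ | ∃ m : ℕ, 1 ≤ m ∧
        (∃ b : ℕ → B, b 0 = b0 ∧
          ∀ l, l + 1 ≤ m → ∑ i ∈ Finset.range (l + 1), L i (b (l - i)) = 0) ∧ x = (m : ℕ∞)} :=
      ⟨k+1, by omega, ⟨fun j => M (k+1-j) (k+1) b0, hch.1, hch.2⟩, rfl⟩
    have htop : rank b0 = ⊤ := by
      rcases hstab.1 b0 with hle | h
      · exfalso
        have h1 : ((k+1:ℕ):ℕ∞) ≤ rank b0 := by rw [hrank b0]; exact le_sSup hmem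
        have h2 := le_trans h1 hle
        have h3 : k + 1 ≤ k := Nat.cast_le.mp h2
        omega
      · exact h
    have hne : (m:ℕ∞) ≠ ⊤ := by simp
    have hlt : (m:ℕ∞) < rank b0 := by rw [htop]; exact lt_top_iff_ne_top.mpr hne
    rw [hrank b0] at hlt
    obtain ⟨x, hx, hmx⟩ := lt_sSup_iff.mp hlt
    obtain ⟨m', hm', ⟨b, hb0', hbch⟩, rfl⟩ := hx
    have hmm' : m ≤ m' := le_of_lt (Nat.cast_lt.mp hmx)
    have hres := (Phi m hm b (fun l hl => hbch l (by omega))).1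
    rw [hb0'] at hres
    exact hres
  have hSkill : ∀ b0 ∈ N (k+1), ∀ m, 1 ≤ m → S m b0 = 0 := by
    intro b0 hb0 m hm
    exact hNker' m hm b0 (hNinf b0 hb0 m hm)
  -- the action of ψ on the pieces
  have hψS : ∀ l j, j ≤ k → j ≤ l → ∀ x ∈ Nc (j+1), ψ (l-j) (S (j+1) x) = S (l+1) x := by
    intro l j hjk hjl x hx
    by_cases hlj : j = l
    · rw [← hlj]
      rw [Nat.sub_self, hψ0]
      rfl
    · have h1 : 1 ≤ l - j := by omega
      rw [hψ (l-j) h1]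
      simp only [LinearMap.sum_apply, LinearMap.comp_apply]
      have hy : S (j+1) x ∈ R (j+1) := by
        rw [hRdef j]; exact ⟨x, hNcsub j hx, rfl⟩
      rw [Finset.sum_eq_single_of_mem (j+1) (by simp only [Finset.mem_Icc]; omega)]
      · rw [hTS (j+1) (by omega) x hx]
        have e9 : l - j + (j + 1) = l + 1 := by omega
        rw [e9]
      · intro r hr hne
        rw [hTzero r (j+1) (by simp only [Finset.mem_Icc] at hr; omega) (by omega) hne _ hy,
          map_zero]
  -- final assembly
  intro l
  ext x
  simp only [LinearMap.sum_apply, LinearMap.comp_apply]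
  set mn := min (l+1) (k+1) with hmn
  have hmn1 : 1 ≤ mn := by omega
  have hRHS : ∀ j ∈ Finset.range mn,
      ψ (l-j) (S (j+1) (Pn (j+1) x)) = S (l+1) (Pn (j+1) x) := by
    intro j hj
    simp only [Finset.mem_range] at hj
    exact hψS l j (by omega) (by omega) (Pn (j+1) x)
      (hPnrange (j+1) (by omega) (by omega) (LinearMap.mem_range_self _ _))
  rw [Finset.sum_congr rfl hRHS]
  have hdec : S (l+1) x = ∑ i ∈ Finset.Icc 1 (k+1), S (l+1) (Pn i x) := by
    have h0 : S (l+1) (x - ∑ i ∈ Finset.Icc 1 (k+1), Pn i x) = 0 :=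
      hSkill _ (hPnsum x) (l+1) (by omega)
    rw [map_sub, sub_eq_zero] at h0
    rw [h0, map_sum]
  rw [hdec]
  have hsplitI : Finset.Icc 1 (k+1) = Finset.Icc 1 mn ∪ Finset.Icc (mn+1) (k+1) := by
    ext y; simp only [Finset.mem_Icc, Finset.mem_union]; omega
  rw [hsplitI, Finset.sum_union (by
    rw [Finset.disjoint_left]
    intro a ha hb
    simp only [Finset.mem_Icc] at ha hb
    omega)]
  have hzero : ∀ i ∈ Finset.Icc (mn+1) (k+1), S (l+1) (Pn i x) = 0 := by
    intro i hi
    simp only [Finset.mem_Icc] at hi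
    exact hSNc (l+1) i (by omega) (by omega) (Pn i x)
      (hPnrange i (by omega) (by omega) (LinearMap.mem_range_self _ _))
  rw [Finset.sum_congr rfl hzero, Finset.sum_const_zero, add_zero]
  refine Finset.sum_nbij' (fun i => i - 1) (fun j => j + 1) ?_ ?_ ?_ ?_ ?_
  · intro a haa; simp only [Finset.mem_Icc] at haa; simp only [Finset.mem_range]; omega
  · intro a haa; simp only [Finset.mem_range] at haa; simp only [Finset.mem_Icc]; omega
  · intro a haa; simp only [Finset.mem_Icc] at haa
    show a - 1 + 1 = a; omega
  · intro a haa; simp only [Finset.mem_range] at haa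
    show a + 1 - 1 = a; omega
  · intro a haa; simp only [Finset.mem_Icc] at haa
    have e1 : a - 1 + 1 = a := by omega
    rw [e1]
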